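/- Let G be a finite abelian group. If there exists an (r, s)-near-factorization of G, then there exists a symmetric (r, s)-near-factorization of G, i.e., one in which both sets are symmetric. -/

import Mathlib

open Finset
open scoped Pointwise

/-- A pair `(A, B)` of subsets of a finite group `G` is an `(r, s)`-near-factorization of `G`
if `|A| = r`, `|B| = s`, `|A| * |B| = |G| - 1` and `A * B = G \ {e}`. -/
def IsRSNearFactorization {G : Type*} [Group G] [Fintype G] [DecidableEq G]
    (r s : ℕ) (A B : Finset G) : Prop :=
  A.card = r ∧ B.card = s ∧ A.card * B.card = Fintype.card G - 1 ∧
    A * B = Finset.univ \ {1}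

/-- A subset `A` of a group is symmetric if `g ∈ A ↔ g⁻¹ ∈ A` for every `g`. -/
def IsSymmetricSet {G : Type*} [Group G] [DecidableEq G] (A : Finset G) : Prop :=
  ∀ g : G, g ∈ A ↔ g⁻¹ ∈ A

section Aux
open MonoidAlgebra

set_option linter.unusedSectionVars false
set_option maxHeartbeats 1000000

variable {G : Type*} [CommGroup G] [Fintype G] [DecidableEq G]

noncomputable def sig (S : Finset G) : MonoidAlgebra ℤ G := ∑ g ∈ S, single g 1

lemma sig_apply (S : Finset G) (x : G) : (sig S).coeff x = if x ∈ S then 1 else 0 := by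
  classical
  rw [sig, MonoidAlgebra.coeff_sum, Finsupp.finset_sum_apply]
  simp [MonoidAlgebra.coeff_single, Finsupp.single_apply]

noncomputable def tau : MonoidAlgebra ℤ G ≃ₐ[ℤ] MonoidAlgebra ℤ G :=
  MonoidAlgebra.domCongr ℤ ℤ (MulEquiv.inv G)

lemma tau_apply (f : MonoidAlgebra ℤ G) (x : G) : (tau f).coeff x = f.coeff x⁻¹ := by
  simp [tau]

lemma tau_sig (S : Finset G) : tau (sig S) = sig (S.image (·⁻¹)) := by
  ext x
  rw [tau_apply, sig_apply, sig_apply]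
  congr 1
  simp only [Finset.mem_image, eq_iff_iff]
  constructor
  · intro h; exact ⟨x⁻¹, h, inv_inv x⟩
  · rintro ⟨a, ha, rfl⟩; simpa using ha

lemma tau_tau (f : MonoidAlgebra ℤ G) : tau (tau f) = f := by
  ext x; rw [tau_apply, tau_apply, inv_inv]

lemma single_mul_sig_univ (g : G) : single g (1:ℤ) * sig (univ : Finset G) = sig univ := by
  rw [sig, Finset.mul_sum]
  simp only [MonoidAlgebra.single_mul_single, one_mul]
  exact Fintype.sum_bijective (g * ·) (Group.mulLeft_bijective g) _ _ (fun x => rfl)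

lemma sig_mul_sig_univ (S : Finset G) :
    sig S * sig (univ : Finset G) = (S.card : ℤ) • sig univ := by
  rw [sig, Finset.sum_mul]
  rw [Finset.sum_congr rfl (fun g _ => single_mul_sig_univ g)]
  simp [Finset.sum_const]



def cnt (S T : Finset G) (x : G) : ℕ := ((S ×ˢ T).filter fun p => p.1 * p.2 = x).card

lemma sum_cnt (S T : Finset G) : ∑ x : G, cnt S T x = S.card * T.card := by
  classical
  rw [← Finset.card_product]
  rw [Finset.card_eq_sum_card_fiberwise (f := fun p => p.1 * p.2) (t := univ)
    (fun p _ => Finset.mem_univ _)]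
  rfl

lemma cnt_pos_of_mem {S T : Finset G} {x : G} (hx : x ∈ S * T) : 1 ≤ cnt S T x := by
  rw [Finset.mem_mul] at hx
  obtain ⟨a, ha, b, hb, rfl⟩ := hx
  rw [cnt]
  refine Nat.one_le_iff_ne_zero.2 (Finset.card_ne_zero_of_mem (a := (a,b)) ?_)
  simp [Finset.mem_filter, Finset.mem_product, ha, hb]

lemma cnt_eq_zero_of_not_mem {S T : Finset G} {x : G} (hx : x ∉ S * T) : cnt S T x = 0 := by
  rw [cnt, Finset.card_eq_zero, Finset.filter_eq_empty_iff]
  rintro ⟨a,b⟩ hp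
  rw [Finset.mem_product] at hp
  exact fun he => hx (he ▸ Finset.mul_mem_mul hp.1 hp.2)

lemma cnt_eq_one (A B : Finset G)
    (hcard : A.card * B.card = Fintype.card G - 1)
    (hAB : A * B = Finset.univ \ {1}) (x : G) :
    cnt A B x = if x = 1 then 0 else 1 := by
  classical
  have h1 : cnt A B 1 = 0 := by
    apply cnt_eq_zero_of_not_mem; rw [hAB]; simp
  have hmem : ∀ y : G, y ≠ 1 → 1 ≤ cnt A B y := by
    intro y hy
    apply cnt_pos_of_mem; rw [hAB]; simp [hy]
  have hsum : ∑ y ∈ (univ : Finset G).erase 1, cnt A B y = ((univ : Finset G).erase 1).card := by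
    have := sum_cnt A B
    rw [← Finset.add_sum_erase _ _ (Finset.mem_univ (1:G)), h1, zero_add] at this
    rw [this, hcard, Finset.card_erase_of_mem (Finset.mem_univ _), Finset.card_univ]
  have key : ∀ y ∈ (univ : Finset G).erase 1, cnt A B y = 1 := by
    have := (Finset.sum_eq_sum_iff_of_le (s := (univ : Finset G).erase 1)
      (f := fun _ => 1) (g := cnt A B)
      (fun i hi => hmem i (Finset.ne_of_mem_erase hi))).1 ?_
    · intro y hy; exact (this y hy).symm
    · rw [hsum, Finset.sum_const, smul_eq_mul, mul_one]
  rcases eq_or_ne x 1 with rfl | hx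
  · simp [h1]
  · simp [hx, key x (Finset.mem_erase.2 ⟨hx, Finset.mem_univ _⟩)]
lemma sig_mul_sig (S T : Finset G) :
    sig S * sig T = ∑ p ∈ S ×ˢ T, single (p.1 * p.2) (1:ℤ) := by
  rw [sig, sig, Finset.sum_mul_sum, Finset.sum_product]
  simp [MonoidAlgebra.single_mul_single]

lemma sig_mul_sig_apply (S T : Finset G) (x : G) :
    (sig S * sig T).coeff x = (cnt S T x : ℤ) := by
  rw [sig_mul_sig, MonoidAlgebra.coeff_sum, Finsupp.finset_sum_apply, cnt]
  rw [Finset.card_filter]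
  push_cast
  refine Finset.sum_congr rfl fun p _ => ?_
  simp [MonoidAlgebra.coeff_single, Finsupp.single_apply, eq_comm]


lemma one_apply' (x : G) : (1 : MonoidAlgebra ℤ G).coeff x = if x = 1 then 1 else 0 := by
  rw [MonoidAlgebra.one_def, MonoidAlgebra.coeff_single, Finsupp.single_apply]
  simp [eq_comm]

lemma sig_eq (A B : Finset G)
    (hcard : A.card * B.card = Fintype.card G - 1)
    (hAB : A * B = Finset.univ \ {1}) :
    sig A * sig B = sig (univ : Finset G) - 1 := by
  ext x
  rw [sig_mul_sig_apply, cnt_eq_one A B hcard hAB x]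
  rw [MonoidAlgebra.coeff_sub, Finsupp.sub_apply, sig_apply, one_apply']
  rcases eq_or_ne x 1 with rfl | hx
  · simp
  · simp [hx]

lemma tau_single (g : G) (a : ℤ) : tau (single g a) = single g⁻¹ a := by
  simp [tau]

lemma fin_decomp (f : MonoidAlgebra ℤ G) : f = ∑ x : G, single x (f.coeff x) := by
  ext y
  rw [MonoidAlgebra.coeff_sum, Finsupp.finset_sum_apply]
  simp [MonoidAlgebra.coeff_single, Finsupp.single_apply]

lemma mul_apply_one (f g : MonoidAlgebra ℤ G) : (f * g).coeff 1 = ∑ x : G, f.coeff x * g.coeff x⁻¹ := by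
  conv_lhs => rw [fin_decomp f, Finset.sum_mul]
  rw [MonoidAlgebra.coeff_sum, Finsupp.finset_sum_apply]
  refine Finset.sum_congr rfl fun x _ => ?_
  rw [MonoidAlgebra.single_mul_apply]
  rw [mul_one]

lemma indicator_iff {p q : Prop} [Decidable p] [Decidable q]
    (h : (if p then (1:ℤ) else 0) = (if q then 1 else 0)) : p ↔ q := by
  by_cases hp : p <;> by_cases hq : q <;> simp_all

lemma mem_image_inv' (S : Finset G) (x : G) : x ∈ S.image (·⁻¹) ↔ x⁻¹ ∈ S := by
  simp only [Finset.mem_image]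
  constructor
  · rintro ⟨a, ha, rfl⟩; simpa using ha
  · intro h; exact ⟨x⁻¹, h, inv_inv x⟩

lemma exists_z (A B : Finset G) (hn : Fintype.card G = A.card * B.card + 1)
    (hAB : A * B = Finset.univ \ {1}) :
    ∃ z : G, (∀ x : G, x⁻¹ ∈ A ↔ x * z⁻¹ ∈ A) ∧ (∀ x : G, x⁻¹ ∈ B ↔ x * z ∈ B) := by
  classical
  set n := Fintype.card G with hndef
  have hcard : A.card * B.card = n - 1 := by omega
  set A' := A.image (·⁻¹) with hA'def
  set B' := B.image (·⁻¹) with hB'def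
  have hA'card : A'.card = A.card := Finset.card_image_of_injective _ inv_injective
  have hB'card : B'.card = B.card := Finset.card_image_of_injective _ inv_injective
  have htauA : tau (sig A) = sig A' := tau_sig A
  have htauB : tau (sig B) = sig B' := tau_sig B
  have htauA' : tau (sig A') = sig A := by rw [← htauA, tau_tau]
  have htauB' : tau (sig B') = sig B := by rw [← htauB, tau_tau]
  set E := sig (univ : Finset G) - (1 : MonoidAlgebra ℤ G) with hEdef
  have hE : sig A * sig B = E := sig_eq A B hcard hAB
  have htauE : tau E = E := by
    rw [hEdef, map_sub, map_one, tau_sig]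
    congr 2
    apply Finset.eq_univ_of_forall
    intro x
    rw [mem_image_inv']
    exact Finset.mem_univ _
  have hu2 : sig (univ : Finset G) * sig (univ : Finset G) = (n:ℤ) • sig (univ : Finset G) := by
    rw [sig_mul_sig_univ, Finset.card_univ]
  have hPP : (sig A' * sig B) * tau (sig A' * sig B) = E * E := by
    rw [map_mul, htauA', htauB]
    calc sig A' * sig B * (sig A * sig B')
        = (sig A' * sig B') * (sig A * sig B) := by ring
      _ = E * E := by rw [← htauA, ← htauB, ← map_mul, hE, htauE]
  have hE2 : E * E = (n:ℤ) • sig (univ : Finset G)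
      - sig (univ : Finset G) - sig (univ : Finset G) + 1 := by
    calc E * E = sig (univ : Finset G) * sig (univ : Finset G)
          - sig (univ : Finset G) - sig (univ : Finset G) + 1 := by rw [hEdef]; ring
      _ = _ := by rw [hu2]
  have hsumsq : ∑ x : G, (cnt A' B x : ℤ) * (cnt A' B x : ℤ) = (n : ℤ) - 1 := by
    have h1 := congrArg (fun f : MonoidAlgebra ℤ G => f.coeff 1) (hPP.trans hE2)
    rw [mul_apply_one] at h1
    have hL : ∀ x : G, (sig A' * sig B).coeff x * (tau (sig A' * sig B)).coeff x⁻¹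
        = (cnt A' B x : ℤ) * (cnt A' B x : ℤ) := by
      intro x
      rw [tau_apply, inv_inv, sig_mul_sig_apply]
    rw [Finset.sum_congr rfl fun x _ => hL x] at h1
    rw [h1]
    have e1 : ((n:ℤ) • sig (univ : Finset G)).coeff 1 = (n:ℤ) := by
      rw [MonoidAlgebra.coeff_smul, Finsupp.smul_apply, sig_apply]; simp
    simp only [MonoidAlgebra.coeff_add, MonoidAlgebra.coeff_sub, Finsupp.add_apply, Finsupp.sub_apply]
    rw [e1, sig_apply, one_apply']
    simp
  have hsum : ∑ x : G, cnt A' B x = A.card * B.card := by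
    rw [sum_cnt, hA'card]
  have cnt01 : ∀ x : G, cnt A' B x = 0 ∨ cnt A' B x = 1 := by
    have hle : ∀ x ∈ (univ : Finset G), (cnt A' B x : ℤ) ≤ (cnt A' B x : ℤ) * (cnt A' B x) := by
      intro x _
      rcases Nat.eq_zero_or_pos (cnt A' B x) with h | h
      · simp [h]
      · have : (1:ℤ) ≤ (cnt A' B x : ℤ) := by exact_mod_cast h
        nlinarith
    have hsq : ∑ x : G, (cnt A' B x : ℤ) = ∑ x : G, (cnt A' B x : ℤ) * (cnt A' B x : ℤ) := by
      rw [hsumsq, ← Nat.cast_sum, hsum, hn]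
      push_cast
      ring
    have := (Finset.sum_eq_sum_iff_of_le hle).1 hsq
    intro x
    have hx := this x (Finset.mem_univ x)
    have : (cnt A' B x : ℤ) * ((cnt A' B x : ℤ) - 1) = 0 := by linarith
    rcases mul_eq_zero.1 this with h | h
    · left; exact_mod_cast h
    · right
      have : (cnt A' B x : ℤ) = 1 := by linarith
      exact_mod_cast this
  set C := (univ : Finset G).filter (fun x => cnt A' B x = 1) with hCdef
  have hCsum : ∑ x : G, cnt A' B x = C.card := by
    rw [← Finset.sum_filter_add_sum_filter_not (univ : Finset G) (fun x => cnt A' B x = 1)]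
    rw [Finset.sum_congr rfl (fun x hx => (Finset.mem_filter.1 hx).2)]
    rw [Finset.sum_const, smul_eq_mul, mul_one]
    have hz0 : ∑ x ∈ (univ : Finset G).filter (fun x => ¬ cnt A' B x = 1), cnt A' B x = 0 := by
      apply Finset.sum_eq_zero
      intro x hx
      rcases cnt01 x with h | h
      · exact h
      · exact absurd h (Finset.mem_filter.1 hx).2
    rw [hz0, add_zero]
  have hCcard : C.card = n - 1 := by rw [← hCsum, hsum, hcard]
  have hcompl : ((univ : Finset G) \ C).card = 1 := by
    rw [Finset.card_sdiff_of_subset (Finset.subset_univ _), Finset.card_univ, hCcard]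
    omega
  obtain ⟨z, hz⟩ := Finset.card_eq_one.1 hcompl
  have hcnt : ∀ x : G, cnt A' B x = if x = z then 0 else 1 := by
    intro x
    rcases eq_or_ne x z with rfl | hx
    · have hxn : x ∉ C := by
        have hmem : x ∈ (univ : Finset G) \ C := by rw [hz]; exact Finset.mem_singleton_self x
        exact (Finset.mem_sdiff.1 hmem).2
      rcases cnt01 x with h | h
      · simp [h]
      · have hxC : x ∈ C := Finset.mem_filter.2 ⟨Finset.mem_univ x, h⟩
        exact absurd hxC hxn
    · have hxC : x ∈ C := by
        by_contra hc
        have hmem : x ∈ (univ : Finset G) \ C := Finset.mem_sdiff.2 ⟨Finset.mem_univ _, hc⟩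
        rw [hz, Finset.mem_singleton] at hmem
        exact hx hmem
      simp [hx, (Finset.mem_filter.1 hxC).2]
  have hP : sig A' * sig B = E * single z 1 := by
    ext x
    rw [sig_mul_sig_apply, hcnt, MonoidAlgebra.mul_single_apply, mul_one, hEdef,
      MonoidAlgebra.coeff_sub, Finsupp.sub_apply, sig_apply, one_apply']
    rcases eq_or_ne x z with rfl | hx
    · simp
    · have hne : x * z⁻¹ ≠ 1 := by
        intro h; exact hx (by rwa [mul_inv_eq_one] at h)
      simp [hx, hne]
  have hu_single : sig (univ : Finset G) * single z 1 = sig (univ : Finset G) := by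
    rw [mul_comm]; exact single_mul_sig_univ z
  have hu_single' : sig (univ : Finset G) * single z⁻¹ 1 = sig (univ : Finset G) := by
    rw [mul_comm]; exact single_mul_sig_univ z⁻¹
  have hAE : sig A * E = (A.card : ℤ) • sig (univ : Finset G) - sig A := by
    rw [hEdef, mul_sub, mul_one, sig_mul_sig_univ]
  have hA'E : sig A' * E = (A.card : ℤ) • sig (univ : Finset G) - sig A' := by
    rw [hEdef, mul_sub, mul_one, sig_mul_sig_univ, hA'card]
  have hBE : sig B * E = (B.card : ℤ) • sig (univ : Finset G) - sig B := by
    rw [hEdef, mul_sub, mul_one, sig_mul_sig_univ]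
  have hB'E : sig B' * E = (B.card : ℤ) • sig (univ : Finset G) - sig B' := by
    rw [hEdef, mul_sub, mul_one, sig_mul_sig_univ, hB'card]
  have hA'eq : sig A' = sig A * single z 1 := by
    have step : sig A' * E = (sig A * E) * single z 1 := by
      calc sig A' * E = sig A * (sig A' * sig B) := by rw [← hE]; ring
        _ = sig A * (E * single z 1) := by rw [hP]
        _ = (sig A * E) * single z 1 := by ring
    rw [hA'E, hAE, sub_mul, smul_mul_assoc, hu_single] at step
    exact sub_right_inj.1 step
  have htauP : sig A * sig B' = E * single z⁻¹ 1 := by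
    have h2 := congrArg tau hP
    rw [map_mul, map_mul, htauA', htauB, htauE, tau_single] at h2
    calc sig A * sig B' = sig B' * sig A := by ring
      _ = E * single z⁻¹ 1 := by rw [← h2]; ring
  have hB'eq : sig B' = sig B * single z⁻¹ 1 := by
    have step : sig B' * E = (sig B * E) * single z⁻¹ 1 := by
      calc sig B' * E = sig B * (sig A * sig B') := by rw [← hE]; ring
        _ = sig B * (E * single z⁻¹ 1) := by rw [htauP]
        _ = (sig B * E) * single z⁻¹ 1 := by ring
    rw [hB'E, hBE, sub_mul, smul_mul_assoc, hu_single'] at step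
    exact sub_right_inj.1 step
  refine ⟨z, fun x => ?_, fun x => ?_⟩
  · have h3 := congrArg (fun f : MonoidAlgebra ℤ G => f.coeff x) hA'eq
    rw [sig_apply, MonoidAlgebra.mul_single_apply, mul_one, sig_apply] at h3
    have h := indicator_iff h3
    rw [← mem_image_inv' A x, ← hA'def]
    exact h
  · have h3 := congrArg (fun f : MonoidAlgebra ℤ G => f.coeff x) hB'eq
    rw [sig_apply, MonoidAlgebra.mul_single_apply, mul_one, inv_inv, sig_apply] at h3
    have h := indicator_iff h3
    rw [← mem_image_inv' B x, ← hB'def]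
    exact h

lemma even_card_of_fpf_involution {A : Finset G} (z : G)
    (hmem : ∀ a ∈ A, a⁻¹ * z⁻¹ ∈ A) (hfix : ∀ a ∈ A, a⁻¹ * z⁻¹ ≠ a) :
    2 ∣ A.card := by
  classical
  have hsum : ∑ _a ∈ A, (1 : ZMod 2) = 0 := by
    refine Finset.sum_involution (g := fun a _ => a⁻¹ * z⁻¹) (fun a ha => ?_)
      (fun a ha _ => hfix a ha) (fun a ha => hmem a ha) (fun a ha => ?_)
    · decide
    · show (a⁻¹ * z⁻¹)⁻¹ * z⁻¹ = a
      rw [mul_inv_rev, inv_inv, inv_inv]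
      rw [mul_comm z a, mul_assoc, mul_inv_cancel, mul_one]
  rw [Finset.sum_const, nsmul_eq_mul, mul_one] at hsum
  exact (ZMod.natCast_eq_zero_iff _ 2).1 hsum

lemma mem_image_mul (S : Finset G) (t x : G) : x ∈ S.image (· * t) ↔ x * t⁻¹ ∈ S := by
  simp only [Finset.mem_image]
  constructor
  · rintro ⟨a, ha, rfl⟩; simpa using ha
  · intro h; exact ⟨x * t⁻¹, h, by simp⟩

end Aux

set_option maxHeartbeats 1000000 in
theorem exists_symmetric_near_factorization {G : Type*} [CommGroup G] [Fintype G]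
    [DecidableEq G] (r s : ℕ)
    (h : ∃ A B : Finset G, IsRSNearFactorization r s A B) :
    ∃ A B : Finset G, IsRSNearFactorization r s A B ∧
      IsSymmetricSet A ∧ IsSymmetricSet B := by
  classical
  obtain ⟨A, B, hA, hB, hcard, hAB⟩ := h
  rcases eq_or_ne (Fintype.card G) 1 with h1 | h1
  · obtain ⟨x, hx⟩ := Fintype.card_eq_one_iff.1 h1
    have hgg : ∀ g : G, g⁻¹ = g := fun g => (hx g⁻¹).trans (hx g).symm
    exact ⟨A, B, ⟨hA, hB, hcard, hAB⟩, fun g => by rw [hgg], fun g => by rw [hgg]⟩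
  have hge : 1 ≤ Fintype.card G := Fintype.card_pos
  have hn : Fintype.card G = A.card * B.card + 1 := by omega
  obtain ⟨z, hAz, hBz⟩ := exists_z A B hn hAB
  by_cases hsq : ∃ t : G, t * t = z
  · obtain ⟨t, ht⟩ := hsq
    refine ⟨A.image (· * t), B.image (· * t⁻¹), ⟨?_, ?_, ?_, ?_⟩, ?_, ?_⟩
    · rw [Finset.card_image_of_injective _ (mul_left_injective t)]; exact hA
    · rw [Finset.card_image_of_injective _ (mul_left_injective t⁻¹)]; exact hB
    · rw [Finset.card_image_of_injective _ (mul_left_injective t),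
        Finset.card_image_of_injective _ (mul_left_injective t⁻¹)]
      exact hcard
    · have himg : A.image (· * t) * B.image (· * t⁻¹) = A * B := by
        ext x
        simp only [Finset.mem_mul, Finset.mem_image]
        constructor
        · rintro ⟨y, ⟨a, ha, rfl⟩, w, ⟨b, hb, rfl⟩, rfl⟩
          exact ⟨a, ha, b, hb, by rw [mul_mul_mul_comm, mul_inv_cancel, mul_one]⟩
        · rintro ⟨a, ha, b, hb, rfl⟩
          exact ⟨a * t, ⟨a, ha, rfl⟩, b * t⁻¹, ⟨b, hb, rfl⟩,
            by rw [mul_mul_mul_comm, mul_inv_cancel, mul_one]⟩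
      rw [himg, hAB]
    · intro g
      rw [mem_image_mul, mem_image_mul]
      have h2 := hAz (t * g)
      rw [mul_inv_rev] at h2
      have e1 : t * g * z⁻¹ = g * t⁻¹ := by
        rw [← ht, mul_inv_rev, mul_comm t g, mul_assoc, mul_inv_cancel_left]
      rw [e1] at h2
      exact h2.symm
    · intro g
      have m1 : g ∈ B.image (· * t⁻¹) ↔ g * t ∈ B := by rw [mem_image_mul, inv_inv]
      have m2 : g⁻¹ ∈ B.image (· * t⁻¹) ↔ g⁻¹ * t ∈ B := by rw [mem_image_mul, inv_inv]
      rw [m1, m2]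
      have e3 : t⁻¹ * g * z = g * t := by
        rw [← ht, mul_comm t⁻¹ g, mul_assoc, inv_mul_cancel_left]
      have h3 := hBz (t⁻¹ * g)
      have e5 : (t⁻¹ * g)⁻¹ = g⁻¹ * t := by rw [mul_inv_rev, inv_inv]
      rw [e5, e3] at h3
      exact h3.symm
  · exfalso
    have hmemA : ∀ a ∈ A, a⁻¹ * z⁻¹ ∈ A := by
      intro a ha
      have h5 := hAz a⁻¹
      rw [inv_inv] at h5
      exact h5.1 ha
    have hfixA : ∀ a ∈ A, a⁻¹ * z⁻¹ ≠ a := by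
      intro a _ he
      refine hsq ⟨a⁻¹, ?_⟩
      have h4 := congrArg (fun w => a * w) he
      rw [mul_inv_cancel_left] at h4
      rw [← mul_inv_rev, ← h4, inv_inv]
    have heven : 2 ∣ A.card := even_card_of_fpf_involution z hmemA hfixA
    have hnotinj : ¬ Function.Injective (fun g : G => g * g) := by
      intro hinj
      have hsurj := Finite.injective_iff_surjective.1 hinj
      obtain ⟨t, ht⟩ := hsurj z
      exact hsq ⟨t, ht⟩
    rw [Function.not_injective_iff] at hnotinj
    obtain ⟨a, b, hab, hne⟩ := hnotinj
    have hw : (a * b⁻¹) * (a * b⁻¹) = 1 := by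
      rw [mul_mul_mul_comm, ← mul_inv_rev, hab, mul_inv_cancel]
    have hw1 : a * b⁻¹ ≠ 1 := by
      intro hc; exact hne (by rwa [mul_inv_eq_one] at hc)
    have ho : orderOf (a * b⁻¹) = 2 := by
      have : Fact (Nat.Prime 2) := ⟨Nat.prime_two⟩
      exact orderOf_eq_prime (by rw [pow_two]; exact hw) hw1
    have h2n : 2 ∣ Fintype.card G := ho ▸ orderOf_dvd_card
    have hdvd : 2 ∣ A.card * B.card := Dvd.dvd.mul_right heven B.card
    omega
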